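/- Completeness direction of the reduction: if f : V₁ → V₂ is a graph isomorphism between G₁ and G₂, then there exists a lifted action with |V₁| parameters (one parameter p_v per vertex v ∈ V₁, empty preconditions and delete effects, add effects {edge(p_v, p_{v'}) : (v,v') ∈ E₁}) and substitutions σ₁(p_v) = v and σ₂ = f ∘ σ₁ that ground the action consistently with both transitions of the constructed synthesis instance. -/

import Mathlib

def groundE {O : Type*} {k : ℕ} (σ : Fin k → O) (e : Fin k × Fin k) : O × O :=
  (σ e.1, σ e.2)

/-- Completeness direction of the reduction: a graph isomorphism `f : G₁ → G₂` yields a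
lifted action with `|V₁|` parameters (empty preconditions and delete effects, add effects
the lifted edges of `E₁`, with `σ₁` enumerating `V₁` bijectively and `σ₂ = f ∘ σ₁`) that
is grounded consistently with both transitions of the constructed synthesis instance. -/
theorem stmt13 {O : Type*} [DecidableEq O]
    (V₁ V₂ : Finset O) (E₁ E₂ : Finset (O × O))
    (hdisj : Disjoint V₁ V₂)
    (hE₁ : ∀ e ∈ E₁, e.1 ∈ V₁ ∧ e.2 ∈ V₁) (hE₂ : ∀ e ∈ E₂, e.1 ∈ V₂ ∧ e.2 ∈ V₂)
    (f : O → O)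
    (hmap : ∀ v ∈ V₁, f v ∈ V₂)
    (hinj : Set.InjOn f ↑V₁)
    (hsurj : V₁.image f = V₂)
    (hedge : ∀ u ∈ V₁, ∀ v ∈ V₁, ((u, v) ∈ E₁ ↔ (f u, f v) ∈ E₂)) :
    ∃ (pre add del : Finset (Fin V₁.card × Fin V₁.card)) (σ₁ σ₂ : Fin V₁.card → O),
      pre = ∅ ∧ del = ∅ ∧
      Function.Injective σ₁ ∧ Finset.image σ₁ Finset.univ = V₁ ∧
      σ₂ = f ∘ σ₁ ∧
      add.image (groundE σ₁) = E₁ ∧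
      ((∀ g ∈ pre, groundE σ₁ g ∈ (∅ : Finset (O × O))) ∧
        E₁ = ((∅ : Finset (O × O)) \ del.image (groundE σ₁)) ∪ add.image (groundE σ₁)) ∧
      ((∀ g ∈ pre, groundE σ₂ g ∈ (∅ : Finset (O × O))) ∧
        E₂ = ((∅ : Finset (O × O)) \ del.image (groundE σ₂)) ∪ add.image (groundE σ₂)) := by
  classical
  set e := V₁.equivFin
  set σ₁ : Fin V₁.card → O := fun i => (e.symm i : O) with hσ₁
  have hσ₁mem : ∀ i, σ₁ i ∈ V₁ := fun i => (e.symm i).2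
  have hσ₁inj : Function.Injective σ₁ := fun i j h => by
    apply e.symm.injective; exact Subtype.ext h
  have hσ₁img : Finset.image σ₁ Finset.univ = V₁ := by
    apply Finset.Subset.antisymm
    · intro x hx
      simp only [Finset.mem_image] at hx
      obtain ⟨i, _, rfl⟩ := hx
      exact hσ₁mem i
    · intro x hx
      simp only [Finset.mem_image]
      exact ⟨e ⟨x, hx⟩, Finset.mem_univ _, by simp [hσ₁]⟩
  set add : Finset (Fin V₁.card × Fin V₁.card) :=
    Finset.univ.filter (fun p => groundE σ₁ p ∈ E₁) with hadd
  have himg1 : add.image (groundE σ₁) = E₁ := by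
    apply Finset.Subset.antisymm
    · intro x hx
      simp only [Finset.mem_image, hadd, Finset.mem_filter] at hx
      obtain ⟨p, ⟨_, hp⟩, rfl⟩ := hx
      exact hp
    · rintro ⟨a, b⟩ hab
      obtain ⟨ha, hb⟩ := hE₁ _ hab
      obtain ⟨i, _, hi⟩ := Finset.mem_image.mp (hσ₁img ▸ ha)
      obtain ⟨j, _, hj⟩ := Finset.mem_image.mp (hσ₁img ▸ hb)
      refine Finset.mem_image.mpr ⟨(i, j), ?_, ?_⟩
      · simp only [hadd, Finset.mem_filter, Finset.mem_univ, true_and, groundE, hi, hj]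
        exact (Finset.mem_filter_univ _).mpr (by rw [hi, hj]; exact hab)
      · simp [groundE, hi, hj]
  have himg2 : add.image (groundE (f ∘ σ₁)) = E₂ := by
    apply Finset.Subset.antisymm
    · intro x hx
      simp only [Finset.mem_image, hadd, Finset.mem_filter, Finset.mem_univ, true_and] at hx
      obtain ⟨p, hp, rfl⟩ := hx
      have := hedge _ (hσ₁mem p.1) _ (hσ₁mem p.2)
      simp only [groundE] at hp ⊢
      exact this.mp hp
    · rintro ⟨a, b⟩ hab
      obtain ⟨ha, hb⟩ := hE₂ _ hab
      obtain ⟨u, hu, rfl⟩ := Finset.mem_image.mp (hsurj ▸ ha)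
      obtain ⟨v, hv, rfl⟩ := Finset.mem_image.mp (hsurj ▸ hb)
      have huv : (u, v) ∈ E₁ := (hedge u hu v hv).mpr hab
      obtain ⟨i, _, hi⟩ := Finset.mem_image.mp (hσ₁img ▸ hu)
      obtain ⟨j, _, hj⟩ := Finset.mem_image.mp (hσ₁img ▸ hv)
      refine Finset.mem_image.mpr ⟨(i, j), ?_, ?_⟩
      · simp only [hadd, Finset.mem_filter, Finset.mem_univ, true_and, groundE, hi, hj]
        exact (Finset.mem_filter_univ _).mpr (by rw [hi, hj]; exact huv)
      · simp [groundE, hi, hj]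
  refine ⟨∅, add, ∅, σ₁, f ∘ σ₁, rfl, rfl, hσ₁inj, hσ₁img, rfl, himg1,
    ⟨fun g hg => absurd hg (Finset.notMem_empty g), by simp [himg1]⟩,
    ⟨fun g hg => absurd hg (Finset.notMem_empty g), by simp [himg2]⟩⟩
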